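/- If G is a highly symmetric graph with a cut-edge (i,j), then the two components G_i and G_j obtained by deleting the edge (i,j) satisfy |E(G_i)| = |E(G_j)| = (m-1)/2, where m = |E(G)|; in particular the two components have the same number of edges. -/

import Mathlib

open Finset Matrix Polynomial

/-- The transition matrix of the simple random walk on a graph:
`P i j = 1/deg(i)` if `i ~ j`, and `0` otherwise. -/
noncomputable def transMatrix {V : Type*} [Fintype V] (G : SimpleGraph V)
    [DecidableRel G.Adj] : Matrix V V ℝ :=
  fun i j => if G.Adj i j then (1 : ℝ) / (G.degree i) else 0

/-- The stationary distribution of the simple random walk: `π i = deg(i) / (2|E|)`. -/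
noncomputable def stationary {V : Type*} [Fintype V] [DecidableEq V] (G : SimpleGraph V)
    [DecidableRel G.Adj] : V → ℝ :=
  fun i => (G.degree i : ℝ) / (2 * G.edgeFinset.card)

/-- `H` is the table of expected hitting times of the simple random walk on `G`:
`H a b = E_a T_b`.  It is characterized by `H b b = 0` and the one-step
(first-step analysis) equations `H a b = 1 + ∑_j P a j * H j b` for `a ≠ b`. -/
def IsHittingTime {V : Type*} [Fintype V] (G : SimpleGraph V) [DecidableRel G.Adj]
    (H : V → V → ℝ) : Prop :=
  (∀ b, H b b = 0) ∧ ∀ a b, a ≠ b → H a b = 1 + ∑ j, transMatrix G a j * H j b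

/-- `R` is the table of effective resistances of `G` (unit resistor on each edge):
`R a b = v a - v b` where `v` is a potential for a unit current flow from `a` to `b`,
i.e. `L v = 1_a - 1_b` for the graph Laplacian `L`. -/
def IsEffectiveResistance {V : Type*} [Fintype V] [DecidableEq V] (G : SimpleGraph V)
    [DecidableRel G.Adj] (R : V → V → ℝ) : Prop :=
  ∀ a b, ∃ v : V → ℝ,
    G.lapMatrix ℝ *ᵥ v =
      (fun x => (if x = a then (1 : ℝ) else 0) - (if x = b then (1 : ℝ) else 0)) ∧
    R a b = v a - v b

lemma key_hitting {V : Type*} [Fintype V] [DecidableEq V]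
    (G : SimpleGraph V) [DecidableRel G.Adj] (hconn : G.Connected)
    (H : V → V → ℝ) (hH : IsHittingTime G H)
    (i j : V) (hadj : G.Adj i j)
    (hnr : ¬ (G.deleteEdges {s(i, j)}).Reachable i j) :
    H i j = 2 * (({e : Sym2 V | e ∈ (G.deleteEdges {s(i, j)}).edgeSet ∧
        ∀ x ∈ e, (G.deleteEdges {s(i, j)}).Reachable i x}.ncard : ℕ) : ℝ) + 1 := by
  classical
  set G' := G.deleteEdges {s(i, j)} with hG'def
  have hG'le : ∀ {a b : V}, G'.Adj a b → G.Adj a b := fun h =>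
    (SimpleGraph.deleteEdges_adj.mp h).1
  set S : Finset V := Finset.univ.filter (fun x => G'.Reachable i x) with hSdef
  have hiS : i ∈ S := by simp only [hSdef, Finset.mem_filter, Finset.mem_univ, true_and]; exact SimpleGraph.Reachable.refl i
  have hjS : j ∉ S := by simpa [hSdef] using hnr
  have hmem : ∀ {a b : V}, a ∈ S → G'.Adj a b → b ∈ S := by
    intro a b ha hab
    simp only [hSdef, Finset.mem_filter, Finset.mem_univ, true_and] at ha ⊢
    exact ha.trans hab.reachable
  -- degrees
  have hdegi : G'.degree i + 1 = G.degree i := by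
    have hne : G'.neighborFinset i = (G.neighborFinset i).erase j := by
      ext b
      simp only [SimpleGraph.mem_neighborFinset, Finset.mem_erase, hG'def,
        SimpleGraph.deleteEdges_adj, Set.mem_singleton_iff, Sym2.congr_right]
      tauto
    have hjmem : j ∈ G.neighborFinset i := by rwa [SimpleGraph.mem_neighborFinset]
    have hpos : 0 < (G.neighborFinset i).card := Finset.card_pos.2 ⟨j, hjmem⟩
    show (G'.neighborFinset i).card + 1 = (G.neighborFinset i).card
    rw [hne, Finset.card_erase_of_mem hjmem]
    omega
  have hdegother : ∀ a, a ≠ i → a ≠ j → G'.degree a = G.degree a := by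
    intro a hai haj
    have hne : G'.neighborFinset a = G.neighborFinset a := by
      ext b
      simp only [SimpleGraph.mem_neighborFinset, hG'def, SimpleGraph.deleteEdges_adj,
        Set.mem_singleton_iff]
      constructor
      · exact fun h => h.1
      · intro h
        refine ⟨h, fun hs => ?_⟩
        rw [Sym2.eq_iff] at hs
        rcases hs with ⟨rfl, rfl⟩ | ⟨rfl, rfl⟩
        · exact hai rfl
        · exact haj rfl
    show (G'.neighborFinset a).card = (G.neighborFinset a).card
    rw [hne]
  have hdpos : ∀ a, 0 < G.degree a := by
    intro a
    rw [SimpleGraph.degree_pos_iff_exists_adj]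
    rcases eq_or_ne a j with rfl | h
    · exact ⟨i, hadj.symm⟩
    · obtain ⟨w⟩ := hconn a j
      cases w with
      | nil => exact absurd rfl h
      | cons h' _ => exact ⟨_, h'⟩
  -- one step
  have hstep : ∀ a ∈ S, (G.degree a : ℝ) * H a j
      = (G.degree a : ℝ) + ∑ b, (if G'.Adj a b then H b j else 0) := by
    intro a ha
    have haj : a ≠ j := fun h => hjS (h ▸ ha)
    have hd : (G.degree a : ℝ) ≠ 0 := Nat.cast_ne_zero.mpr (hdpos a).ne'
    rw [hH.2 a j haj, mul_add, mul_one, Finset.mul_sum]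
    congr 1
    refine Finset.sum_congr rfl fun b _ => ?_
    have h1 : (G.degree a : ℝ) * (transMatrix G a b * H b j)
        = if G.Adj a b then H b j else 0 := by
      unfold transMatrix
      split_ifs with h
      · rw [one_div, ← mul_assoc, mul_inv_cancel₀ hd, one_mul]
      · simp
    rw [h1]
    by_cases h : G.Adj a b
    · by_cases h' : G'.Adj a b
      · simp [h, h']
      · have hs : s(a, b) = s(i, j) := by
          by_contra hs
          exact h' (SimpleGraph.deleteEdges_adj.mpr ⟨h, by simpa using hs⟩)
        rw [Sym2.eq_iff] at hs
        rcases hs with ⟨rfl, rfl⟩ | ⟨rfl, rfl⟩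
        · simp [h, h', hH.1]
        · exact absurd ha hjS
    · have h' : ¬ G'.Adj a b := fun hh => h (hG'le hh)
      simp [h, h']
  have hsum1 : ∀ a ∈ S, (∑ b, (if G'.Adj a b then H b j else 0))
      = ∑ b ∈ S, (if G'.Adj a b then H b j else 0) := by
    intro a ha
    refine (Finset.sum_subset (Finset.subset_univ S) fun b _ hb => ?_).symm
    have : ¬ G'.Adj a b := fun h => hb (hmem ha h)
    simp [this]
  have hcount : ∀ b ∈ S, (∑ a ∈ S, (if G'.Adj a b then H b j else 0))
      = (G'.degree b : ℝ) * H b j := by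
    intro b hb
    have h1 : (∑ a ∈ S, (if G'.Adj a b then H b j else 0))
        = (∑ a ∈ S, (if G'.Adj b a then (1 : ℝ) else 0)) * H b j := by
      rw [Finset.sum_mul]
      refine Finset.sum_congr rfl fun a _ => ?_
      simp only [G'.adj_comm a b]
      split_ifs <;> simp
    rw [h1]
    congr 1
    rw [Finset.sum_boole]
    have hfilter : S.filter (fun a => G'.Adj b a) = G'.neighborFinset b := by
      ext a
      simp only [Finset.mem_filter, SimpleGraph.mem_neighborFinset]
      exact ⟨fun h => h.2, fun h => ⟨hmem hb h, h⟩⟩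
    rw [hfilter]
    rfl
  have h2 : ∑ b ∈ S, (G'.degree b : ℝ) * H b j
      = (∑ b ∈ S, (G.degree b : ℝ) * H b j) - H i j := by
    have hsc : ∀ b ∈ S, (G'.degree b : ℝ) * H b j
        = (G.degree b : ℝ) * H b j - (if b = i then H i j else 0) := by
      intro b hb
      rcases eq_or_ne b i with rfl | h
      · have hdc : (G'.degree b : ℝ) = (G.degree b : ℝ) - 1 := by
          have := hdegi
          push_cast [← this]
          ring
        rw [hdc, if_pos rfl]
        ring
      · rw [hdegother b h (fun hh => hjS (hh ▸ hb)), if_neg h, sub_zero]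
    rw [Finset.sum_congr rfl hsc, Finset.sum_sub_distrib]
    congr 1
    simp [Finset.sum_ite_eq', hiS]
  have hmain : H i j = ∑ a ∈ S, (G.degree a : ℝ) := by
    have h1 : ∑ a ∈ S, (G.degree a : ℝ) * H a j
        = (∑ a ∈ S, (G.degree a : ℝ))
          + ((∑ b ∈ S, (G.degree b : ℝ) * H b j) - H i j) := by
      calc ∑ a ∈ S, (G.degree a : ℝ) * H a j
          = ∑ a ∈ S, ((G.degree a : ℝ) + ∑ b ∈ S, (if G'.Adj a b then H b j else 0)) := by
            refine Finset.sum_congr rfl fun a ha => ?_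
            rw [hstep a ha, hsum1 a ha]
        _ = (∑ a ∈ S, (G.degree a : ℝ))
            + ∑ a ∈ S, ∑ b ∈ S, (if G'.Adj a b then H b j else 0) :=
            Finset.sum_add_distrib
        _ = (∑ a ∈ S, (G.degree a : ℝ))
            + ∑ b ∈ S, ∑ a ∈ S, (if G'.Adj a b then H b j else 0) := by
            rw [Finset.sum_comm]
        _ = (∑ a ∈ S, (G.degree a : ℝ)) + ∑ b ∈ S, (G'.degree b : ℝ) * H b j := by
            rw [Finset.sum_congr rfl hcount]
        _ = _ := by rw [h2]
    linarith
  -- handshake on the component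
  let G2 : SimpleGraph V :=
    { Adj := fun a b => G'.Adj a b ∧ G'.Reachable i a ∧ G'.Reachable i b
      symm := ⟨by rintro a b ⟨h, ha, hb⟩; exact ⟨h.symm, hb, ha⟩⟩
      loopless := ⟨fun a h => G'.irrefl h.1⟩ }
  letI : DecidableRel G2.Adj := fun a b => Classical.dec _
  set Ei : Finset (Sym2 V) :=
    G'.edgeFinset.filter (fun e => ∀ x ∈ e, G'.Reachable i x) with hEidef
  have hG2edge : G2.edgeFinset = Ei := by
    ext e
    induction e using Sym2.ind with
    | _ a b =>
      simp only [hEidef, SimpleGraph.mem_edgeFinset, Finset.mem_filter,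
        SimpleGraph.mem_edgeSet]
      constructor
      · rintro ⟨h, ha, hb⟩
        refine ⟨h, fun x hx => ?_⟩
        rcases Sym2.mem_iff.mp hx with rfl | rfl
        · exact ha
        · exact hb
      · rintro ⟨h, hall⟩
        exact ⟨h, hall a (Sym2.mem_mk_left a b), hall b (Sym2.mem_mk_right a b)⟩
  have hG2deg : ∀ a, G2.degree a = if a ∈ S then G'.degree a else 0 := by
    intro a
    by_cases ha : a ∈ S
    · have haR : G'.Reachable i a := by
        simpa [hSdef] using ha
      have hne : G2.neighborFinset a = G'.neighborFinset a := by
        ext b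
        simp only [SimpleGraph.mem_neighborFinset]
        exact ⟨fun h => h.1, fun h => ⟨h, haR, haR.trans h.reachable⟩⟩
      rw [if_pos ha]
      show (G2.neighborFinset a).card = (G'.neighborFinset a).card
      rw [hne]
    · have haR : ¬ G'.Reachable i a := by
        simpa [hSdef] using ha
      have hne : G2.neighborFinset a = ∅ := by
        ext b
        simp only [SimpleGraph.mem_neighborFinset, Finset.notMem_empty, iff_false]
        exact fun h => haR h.2.1
      rw [if_neg ha]
      show (G2.neighborFinset a).card = 0
      rw [hne, Finset.card_empty]
  have hhand : ∑ a ∈ S, G'.degree a = 2 * Ei.card := by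
    rw [← hG2edge, ← SimpleGraph.sum_degrees_eq_twice_card_edges]
    rw [show (∑ v, G2.degree v) = ∑ v ∈ S, G2.degree v from
      (Finset.sum_subset (Finset.subset_univ S) fun x _ hx => by
        rw [hG2deg, if_neg hx]).symm]
    exact (Finset.sum_congr rfl fun a ha => by rw [hG2deg, if_pos ha]).symm
  have hDsum : ∑ a ∈ S, G.degree a = 2 * Ei.card + 1 := by
    have h1 : ∑ a ∈ S, G.degree a
        = ∑ a ∈ S, (G'.degree a + if a = i then 1 else 0) := by
      refine Finset.sum_congr rfl fun a ha => ?_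
      rcases eq_or_ne a i with rfl | h
      · rw [if_pos rfl, hdegi]
      · rw [hdegother a h (fun hh => hjS (hh ▸ ha)), if_neg h, Nat.add_zero]
    rw [h1, Finset.sum_add_distrib, hhand]
    congr 1
    simp [Finset.sum_ite_eq', hiS]
  have hsetEi : {e : Sym2 V | e ∈ G'.edgeSet ∧ ∀ x ∈ e, G'.Reachable i x}
      = (↑Ei : Set (Sym2 V)) := by
    ext e
    simp [hEidef, SimpleGraph.mem_edgeFinset]
  rw [hsetEi, Set.ncard_coe_finset, hmain, ← Nat.cast_sum, hDsum]
  push_cast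
  ring

/-- If `G` is a highly symmetric graph with `m` edges and `(i,j)` is a cut-edge,
then the two components `G_i` and `G_j` obtained by deleting the edge `(i,j)`
each have `(m-1)/2` edges; in particular they have the same number of edges. -/
theorem HS_cut_edge_components {V : Type*} [Fintype V] [DecidableEq V]
    (G : SimpleGraph V) [DecidableRel G.Adj] (hconn : G.Connected)
    (H : V → V → ℝ) (hH : IsHittingTime G H) (hHS : ∀ a b, H a b = H b a)
    (i j : V) (hadj : G.Adj i j)
    (hcut : ¬ (G.deleteEdges {s(i, j)}).Preconnected) :
    {e : Sym2 V | e ∈ (G.deleteEdges {s(i, j)}).edgeSet ∧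
        ∀ x ∈ e, (G.deleteEdges {s(i, j)}).Reachable i x}.ncard
        = (G.edgeFinset.card - 1) / 2 ∧
      {e : Sym2 V | e ∈ (G.deleteEdges {s(i, j)}).edgeSet ∧
        ∀ x ∈ e, (G.deleteEdges {s(i, j)}).Reachable j x}.ncard
        = (G.edgeFinset.card - 1) / 2 := by
  classical
  set G' := G.deleteEdges {s(i, j)} with hG'def
  have hstep : ∀ ⦃u v : V⦄, G.Adj u v →
      (G'.Reachable i u ∨ G'.Reachable j u) →
      (G'.Reachable i v ∨ G'.Reachable j v) := by
    intro u v huv hu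
    by_cases h : s(u, v) = s(i, j)
    · rw [Sym2.eq_iff] at h
      rcases h with ⟨rfl, rfl⟩ | ⟨rfl, rfl⟩
      · exact Or.inr (SimpleGraph.Reachable.refl _)
      · exact Or.inl (SimpleGraph.Reachable.refl _)
    · have h' : G'.Adj u v := SimpleGraph.deleteEdges_adj.mpr ⟨huv, by simpa using h⟩
      rcases hu with hu | hu
      · exact Or.inl (hu.trans h'.reachable)
      · exact Or.inr (hu.trans h'.reachable)
  have coverW : ∀ (u v : V) (_ : G.Walk u v),
      (G'.Reachable i u ∨ G'.Reachable j u) →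
      (G'.Reachable i v ∨ G'.Reachable j v) := by
    intro u v w
    induction w with
    | nil => exact id
    | cons h _ ih => exact fun hu => ih (hstep h hu)
  have cover : ∀ x, G'.Reachable i x ∨ G'.Reachable j x := fun x =>
    coverW i x (hconn i x).some (Or.inl (SimpleGraph.Reachable.refl i))
  have hnr : ¬ G'.Reachable i j := by
    intro hr
    apply hcut
    intro u v
    have hu' : G'.Reachable i u := (cover u).elim id fun h => hr.trans h
    have hv' : G'.Reachable i v := (cover v).elim id fun h => hr.trans h
    exact hu'.symm.trans hv'
  have hnr' : ¬ (G.deleteEdges {s(j, i)}).Reachable j i := by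
    rw [Sym2.eq_swap (a := j) (b := i)]
    exact fun h => hnr ((hG'def ▸ h).symm)
  have hki := key_hitting G hconn H hH i j hadj hnr
  have hkj := key_hitting G hconn H hH j i hadj.symm hnr'
  rw [Sym2.eq_swap (a := j) (b := i)] at hkj
  rw [← hG'def] at hki hkj
  set a := {e : Sym2 V | e ∈ G'.edgeSet ∧ ∀ x ∈ e, G'.Reachable i x}.ncard with hadef
  set b := {e : Sym2 V | e ∈ G'.edgeSet ∧ ∀ x ∈ e, G'.Reachable j x}.ncard with hbdef
  have hab : a = b := by
    have : (2 : ℝ) * a + 1 = 2 * b + 1 := by rw [← hki, ← hkj, hHS i j]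
    have h2 : (a : ℝ) = b := by linarith
    exact_mod_cast h2
  -- finset versions
  set Ei : Finset (Sym2 V) :=
    G'.edgeFinset.filter (fun e => ∀ x ∈ e, G'.Reachable i x) with hEidef
  set Ej : Finset (Sym2 V) :=
    G'.edgeFinset.filter (fun e => ∀ x ∈ e, G'.Reachable j x) with hEjdef
  have hacard : a = Ei.card := by
    rw [hadef, show {e : Sym2 V | e ∈ G'.edgeSet ∧ ∀ x ∈ e, G'.Reachable i x}
        = (↑Ei : Set (Sym2 V)) by
      ext e; simp [hEidef, SimpleGraph.mem_edgeFinset], Set.ncard_coe_finset]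
  have hbcard : b = Ej.card := by
    rw [hbdef, show {e : Sym2 V | e ∈ G'.edgeSet ∧ ∀ x ∈ e, G'.Reachable j x}
        = (↑Ej : Set (Sym2 V)) by
      ext e; simp [hEjdef, SimpleGraph.mem_edgeFinset], Set.ncard_coe_finset]
  -- partition of the edges of G'
  have hunion : Ei ∪ Ej = G'.edgeFinset := by
    ext e
    simp only [hEidef, hEjdef, Finset.mem_union, Finset.mem_filter]
    constructor
    · rintro (⟨h, _⟩ | ⟨h, _⟩) <;> exact h
    · intro he
      induction e using Sym2.ind with
      | _ u v =>
        have hadj' : G'.Adj u v := by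
          rwa [SimpleGraph.mem_edgeFinset, SimpleGraph.mem_edgeSet] at he
        rcases cover u with h | h
        · left
          refine ⟨he, fun x hx => ?_⟩
          rcases Sym2.mem_iff.mp hx with rfl | rfl
          · exact h
          · exact h.trans hadj'.reachable
        · right
          refine ⟨he, fun x hx => ?_⟩
          rcases Sym2.mem_iff.mp hx with rfl | rfl
          · exact h
          · exact h.trans hadj'.reachable
  have hdisj : Disjoint Ei Ej := by
    rw [Finset.disjoint_left]
    intro e hei hej
    simp only [hEidef, hEjdef, Finset.mem_filter] at hei hej
    induction e using Sym2.ind with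
    | _ u v =>
      have h1 : G'.Reachable i u := hei.2 u (Sym2.mem_mk_left u v)
      have h2 : G'.Reachable j u := hej.2 u (Sym2.mem_mk_left u v)
      exact hnr (h1.trans h2.symm)
  have hE'card : G'.edgeFinset.card = G.edgeFinset.card - 1 := by
    have hE' : G'.edgeFinset = G.edgeFinset.erase s(i, j) := by
      ext e
      simp only [SimpleGraph.mem_edgeFinset, hG'def, SimpleGraph.edgeSet_deleteEdges,
        Set.mem_diff, Set.mem_singleton_iff, Finset.mem_erase]
      tauto
    rw [hE', Finset.card_erase_of_mem (by rwa [SimpleGraph.mem_edgeFinset,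
      SimpleGraph.mem_edgeSet])]
  have hsum : Ei.card + Ej.card = G.edgeFinset.card - 1 := by
    rw [← hE'card, ← hunion, Finset.card_union_of_disjoint hdisj]
  have hmpos : 1 ≤ G.edgeFinset.card :=
    Finset.card_pos.2 ⟨s(i, j), by rwa [SimpleGraph.mem_edgeFinset, SimpleGraph.mem_edgeSet]⟩
  constructor <;> omega
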